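/- Let 0 < a < 1 and M(a) = π²·tan²(πa/2). The first eigenvalue of the operator −d²/dx² on [0,a] with boundary conditions f'(0) = 0 and f'(a) = −(√(M(a))/2)·f(a) equals π²/4; equivalently, the infimum over nonzero C¹ functions f on [0,a] with f'(0)=0 of the Rayleigh quotient [∫₀^a f'² dx + (√(M(a))/2)·f(a)²] / ∫₀^a f² dx equals π²/4, attained at f(x) = cos(πx/2). -/

import Mathlib

open MeasureTheory Real Set intervalIntegral

lemma aux5_cos_pos {a x : ℝ} (ha1 : a < 1) (hx : x ∈ Icc 0 a) :
    0 < Real.cos (π * x / 2) := by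
  apply Real.cos_pos_of_mem_Ioo
  constructor
  · nlinarith [Real.pi_pos, hx.1]
  · nlinarith [Real.pi_pos, hx.1, hx.2]

lemma aux5_int_cos_sq (a : ℝ) :
    ∫ x in (0:ℝ)..a, Real.cos (π * x / 2) ^ 2 = a / 2 + Real.sin (π * a) / (2 * π) := by
  have hπ := Real.pi_pos
  have key : ∀ x : ℝ, HasDerivAt (fun y => y / 2 + Real.sin (π * y) / (2 * π))
      (Real.cos (π * x / 2) ^ 2) x := by
    intro x
    have h1 : HasDerivAt (fun y : ℝ => π * y) π x := by
      simpa using (hasDerivAt_id x).const_mul π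
    have h2 : HasDerivAt (fun y => Real.sin (π * y)) (Real.cos (π * x) * π) x :=
      (Real.hasDerivAt_sin (π * x)).comp x h1
    have h3 := ((hasDerivAt_id x).div_const 2).add ((h2).div_const (2 * π))
    refine h3.congr_deriv ?_
    have := Real.cos_sq (π * x / 2)
    rw [show 2 * (π * x / 2) = π * x by ring] at this
    rw [this]; field_simp
  rw [intervalIntegral.integral_eq_sub_of_hasDerivAt (fun x _ => key x)
    (((Real.continuous_cos.comp (by continuity)).pow 2).intervalIntegrable 0 a)]
  simp

lemma aux5_int_sin_sq (a : ℝ) :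
    ∫ x in (0:ℝ)..a, (Real.sin (π * x / 2) * (π / 2)) ^ 2
      = π ^ 2 / 4 * (a / 2 - Real.sin (π * a) / (2 * π)) := by
  have hπ := Real.pi_pos
  have key : ∀ x : ℝ, HasDerivAt (fun y => π ^ 2 / 4 * (y / 2 - Real.sin (π * y) / (2 * π)))
      ((Real.sin (π * x / 2) * (π / 2)) ^ 2) x := by
    intro x
    have h1 : HasDerivAt (fun y : ℝ => π * y) π x := by
      simpa using (hasDerivAt_id x).const_mul π
    have h2 : HasDerivAt (fun y => Real.sin (π * y)) (Real.cos (π * x) * π) x :=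
      (Real.hasDerivAt_sin (π * x)).comp x h1
    have h3 := (((hasDerivAt_id x).div_const 2).sub ((h2).div_const (2 * π))).const_mul (π ^ 2 / 4)
    refine h3.congr_deriv ?_
    have hs : Real.sin (π * x / 2) ^ 2 = 1 / 2 - Real.cos (π * x) / 2 := by
      have h4 := Real.cos_sq (π * x / 2)
      rw [show 2 * (π * x / 2) = π * x by ring] at h4
      have := Real.sin_sq (π * x / 2)
      rw [h4] at this; linarith
    rw [mul_pow, hs]; field_simp; ring
  rw [intervalIntegral.integral_eq_sub_of_hasDerivAt (fun x _ => key x)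
    ((((Real.continuous_sin.comp (by continuity : Continuous fun x : ℝ => π * x / 2)).mul continuous_const).pow 2).intervalIntegrable 0 a)]
  simp

lemma aux5_sqrt (a : ℝ) (ha : 0 < a) (ha1 : a < 1) :
    Real.sqrt (π ^ 2 * Real.tan (π * a / 2) ^ 2) = π * Real.tan (π * a / 2) := by
  have hπ := Real.pi_pos
  have hcos : 0 < Real.cos (π * a / 2) := aux5_cos_pos ha1 ⟨ha.le, le_rfl⟩
  have htan : 0 ≤ Real.tan (π * a / 2) := by
    rw [Real.tan_eq_sin_div_cos]
    exact div_nonneg (Real.sin_nonneg_of_nonneg_of_le_pi (by positivity) (by nlinarith)) hcos.le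
  rw [show π ^ 2 * Real.tan (π * a / 2) ^ 2 = (π * Real.tan (π * a / 2)) ^ 2 by ring,
    Real.sqrt_sq (by positivity)]

lemma aux5_D_pos (a : ℝ) (ha : 0 < a) (ha1 : a < 1) :
    0 < a / 2 + Real.sin (π * a) / (2 * π) := by
  have hπ := Real.pi_pos
  have hs : 0 < Real.sin (π * a) :=
    Real.sin_pos_of_pos_of_lt_pi (by positivity) (by nlinarith)
  positivity

lemma aux5_deriv_cos (a : ℝ) (ha : 0 < a) :
    ∀ x ∈ Icc (0:ℝ) a, derivWithin (fun x => Real.cos (π * x / 2)) (Icc 0 a) x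
      = -Real.sin (π * x / 2) * (π / 2) := by
  intro x hx
  have h1 : HasDerivAt (fun y : ℝ => π * y / 2) (π / 2) x := by
    simpa using ((hasDerivAt_id x).const_mul π).div_const 2
  have h2 : HasDerivAt (fun x => Real.cos (π * x / 2)) (-Real.sin (π * x / 2) * (π / 2)) x :=
    by have := (Real.hasDerivAt_cos (π * x / 2)).comp x h1; exact this
  rw [h2.differentiableAt.derivWithin (uniqueDiffOn_Icc ha x hx), h2.deriv]

lemma aux5_eq (a : ℝ) (ha : 0 < a) (ha1 : a < 1) :
    ((∫ x in (0:ℝ)..a,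
          derivWithin (fun x => Real.cos (π * x / 2)) (Icc 0 a) x ^ 2)
        + (Real.sqrt (π ^ 2 * Real.tan (π * a / 2) ^ 2) / 2)
            * Real.cos (π * a / 2) ^ 2)
        / (∫ x in (0:ℝ)..a, Real.cos (π * x / 2) ^ 2) = π ^ 2 / 4 := by
  have hπ := Real.pi_pos
  have hI : (∫ x in (0:ℝ)..a, derivWithin (fun x => Real.cos (π * x / 2)) (Icc 0 a) x ^ 2)
      = π ^ 2 / 4 * (a / 2 - Real.sin (π * a) / (2 * π)) := by
    rw [← aux5_int_sin_sq a]
    apply intervalIntegral.integral_congr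
    intro x hx
    rw [uIcc_of_le ha.le] at hx
    simp only [aux5_deriv_cos a ha x hx]
    ring
  have hcos : 0 < Real.cos (π * a / 2) := aux5_cos_pos ha1 ⟨ha.le, le_rfl⟩
  have hbdry : Real.tan (π * a / 2) * Real.cos (π * a / 2) ^ 2
      = Real.sin (π * a) / 2 := by
    rw [Real.tan_eq_sin_div_cos, show π * a = 2 * (π * a / 2) by ring, Real.sin_two_mul]
    field_simp
  rw [hI, aux5_sqrt a ha ha1, aux5_int_cos_sq a]
  have hD := aux5_D_pos a ha ha1
  rw [div_eq_iff (ne_of_gt hD)]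
  have h2 : π * Real.tan (π * a / 2) / 2 * Real.cos (π * a / 2) ^ 2
      = π * Real.sin (π * a) / 4 := by linear_combination (π / 2) * hbdry
  rw [h2]
  field_simp
  ring

lemma aux5_lower (a : ℝ) (ha : 0 < a) (ha1 : a < 1) (f : ℝ → ℝ)
    (hf : ContDiffOn ℝ 1 f (Icc 0 a)) :
    π ^ 2 / 4 * (∫ x in (0:ℝ)..a, f x ^ 2)
      ≤ (∫ x in (0:ℝ)..a, derivWithin f (Icc 0 a) x ^ 2)
        + π * Real.tan (π * a / 2) / 2 * f a ^ 2 := by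
  have hπ := Real.pi_pos
  set f' : ℝ → ℝ := fun x => derivWithin f (Icc 0 a) x with hf'def
  have hfd : ∀ x ∈ Icc (0:ℝ) a, HasDerivWithinAt f (f' x) (Icc 0 a) x :=
    fun x hx => ((hf.differentiableOn one_ne_zero) x hx).hasDerivWithinAt
  have hf'c : ContinuousOn f' (Icc 0 a) :=
    ((hf.derivWithin (uniqueDiffOn_Icc ha) (m := 0) (by norm_num)).continuousOn)
  have hfc : ContinuousOn f (Icc 0 a) := hf.continuousOn
  set h : ℝ → ℝ := fun x => π / 2 * Real.tan (π * x / 2) * f x ^ 2 with hhdef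
  set g' : ℝ → ℝ := fun x => π / 2 * (1 / Real.cos (π * x / 2) ^ 2 * (π / 2)) * f x ^ 2
      + π / 2 * Real.tan (π * x / 2) * (2 * f x ^ 1 * f' x) with hg'def
  have hcos_ne : ∀ x ∈ Icc (0:ℝ) a, Real.cos (π * x / 2) ≠ 0 :=
    fun x hx => (aux5_cos_pos ha1 hx).ne'
  have hderiv : ∀ x ∈ Icc (0:ℝ) a, HasDerivWithinAt h (g' x) (Icc 0 a) x := by
    intro x hx
    have h1 : HasDerivAt (fun y : ℝ => π * y / 2) (π / 2) x := by
      simpa using ((hasDerivAt_id x).const_mul π).div_const 2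
    have h2 : HasDerivAt (fun y => Real.tan (π * y / 2))
        (1 / Real.cos (π * x / 2) ^ 2 * (π / 2)) x :=
      by have := (Real.hasDerivAt_tan (hcos_ne x hx)).comp x h1; exact this
    have h3 := (h2.const_mul (π / 2)).hasDerivWithinAt (s := Icc 0 a)
    have h4 : HasDerivWithinAt (fun y => f y ^ 2) (2 * f x ^ 1 * f' x) (Icc 0 a) x :=
      (hfd x hx).pow 2
    exact h3.mul h4
  have hcosC : Continuous (fun x : ℝ => Real.cos (π * x / 2)) :=
    Real.continuous_cos.comp ((continuous_const.mul continuous_id).div_const 2)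
  have htanC : ContinuousOn (fun x => Real.tan (π * x / 2)) (Icc 0 a) :=
    Real.continuousOn_tan.comp ((continuous_const.mul continuous_id).div_const 2).continuousOn (fun x hx => hcos_ne x hx)
  have hg'c : ContinuousOn g' (Icc 0 a) := by
    apply ContinuousOn.add
    · exact (continuousOn_const.mul (((continuousOn_const.div
        ((hcosC.pow 2).continuousOn) (fun x hx => pow_ne_zero 2 (hcos_ne x hx))).mul
        continuousOn_const))).mul (hfc.pow 2)
    · exact (continuousOn_const.mul htanC).mul
        ((continuousOn_const.mul (hfc.pow 1)).mul hf'c)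
  have hg'int : IntervalIntegrable g' volume 0 a :=
    ContinuousOn.intervalIntegrable (by rw [uIcc_of_le ha.le]; exact hg'c)
  have hcont_h : ContinuousOn h (Icc 0 a) :=
    fun x hx => (hderiv x hx).continuousWithinAt
  have hFTC : ∫ x in (0:ℝ)..a, g' x = h a - h 0 := by
    apply intervalIntegral.integral_eq_sub_of_hasDeriv_right_of_le ha.le hcont_h
      (fun x hx => ?_) hg'int
    have hx' : x ∈ Icc (0:ℝ) a := Ioo_subset_Icc_self hx
    exact (((hderiv x hx').hasDerivAt (Icc_mem_nhds hx.1 hx.2)).hasDerivWithinAt)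
  have h0 : h 0 = 0 := by simp [hhdef]
  have hf'int : IntervalIntegrable (fun x => f' x ^ 2) volume 0 a :=
    ContinuousOn.intervalIntegrable (by rw [uIcc_of_le ha.le]; exact hf'c.pow 2)
  have hfint : IntervalIntegrable (fun x => π ^ 2 / 4 * f x ^ 2) volume 0 a :=
    ContinuousOn.intervalIntegrable
      (by rw [uIcc_of_le ha.le]; exact continuousOn_const.mul (hfc.pow 2))
  have hpt : ∀ x ∈ Icc (0:ℝ) a, π ^ 2 / 4 * f x ^ 2 ≤ f' x ^ 2 + g' x := by
    intro x hx
    have hc := aux5_cos_pos ha1 hx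
    have hs : Real.sin (π * x / 2) ^ 2 = 1 - Real.cos (π * x / 2) ^ 2 := Real.sin_sq _
    have key : (1 : ℝ) / Real.cos (π * x / 2) ^ 2 = 1 + Real.tan (π * x / 2) ^ 2 := by
      rw [Real.tan_eq_sin_div_cos, div_pow, hs]
      field_simp
      ring
    simp only [hg'def, key]
    nlinarith [sq_nonneg (f' x + π / 2 * Real.tan (π * x / 2) * f x)]
  have hmono : ∫ x in (0:ℝ)..a, π ^ 2 / 4 * f x ^ 2
      ≤ ∫ x in (0:ℝ)..a, (f' x ^ 2 + g' x) :=
    intervalIntegral.integral_mono_on ha.le hfint (hf'int.add hg'int) hpt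
  rw [intervalIntegral.integral_add hf'int hg'int, hFTC, h0] at hmono
  calc π ^ 2 / 4 * ∫ x in (0:ℝ)..a, f x ^ 2
      = ∫ x in (0:ℝ)..a, π ^ 2 / 4 * f x ^ 2 := (intervalIntegral.integral_const_mul _ _).symm
    _ ≤ (∫ x in (0:ℝ)..a, f' x ^ 2) + (h a - 0) := hmono
    _ = (∫ x in (0:ℝ)..a, f' x ^ 2) + π * Real.tan (π * a / 2) / 2 * f a ^ 2 := by
        rw [hhdef]; ring

/-- The infimum of the Rayleigh quotient
`(∫₀^a f'² + (√M(a)/2) f(a)²) / ∫₀^a f²` over nonzero C¹ functions with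
`f'(0) = 0` equals `π²/4`, attained at `f(x) = cos(πx/2)`. -/
theorem stmt5 (a : ℝ) (ha : 0 < a) (ha1 : a < 1) :
    IsLeast
      {q : ℝ | ∃ f : ℝ → ℝ, ContDiffOn ℝ 1 f (Icc 0 a) ∧
        derivWithin f (Icc 0 a) 0 = 0 ∧ (∫ x in (0:ℝ)..a, f x ^ 2) ≠ 0 ∧
        q = ((∫ x in (0:ℝ)..a, derivWithin f (Icc 0 a) x ^ 2)
              + (Real.sqrt (π ^ 2 * Real.tan (π * a / 2) ^ 2) / 2) * f a ^ 2)
            / (∫ x in (0:ℝ)..a, f x ^ 2)}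
      (π ^ 2 / 4)
    ∧ ((∫ x in (0:ℝ)..a,
          derivWithin (fun x => Real.cos (π * x / 2)) (Icc 0 a) x ^ 2)
        + (Real.sqrt (π ^ 2 * Real.tan (π * a / 2) ^ 2) / 2)
            * Real.cos (π * a / 2) ^ 2)
        / (∫ x in (0:ℝ)..a, Real.cos (π * x / 2) ^ 2) = π ^ 2 / 4 := by
  refine ⟨⟨⟨fun x => Real.cos (π * x / 2), ?_, ?_, ?_, ?_⟩, ?_⟩, aux5_eq a ha ha1⟩
  · exact (Real.contDiff_cos.comp
      ((contDiff_const.mul contDiff_id).div_const 2)).contDiffOn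
  · rw [aux5_deriv_cos a ha 0 ⟨le_rfl, ha.le⟩]
    simp
  · rw [aux5_int_cos_sq a]
    exact (aux5_D_pos a ha ha1).ne'
  · exact (aux5_eq a ha ha1).symm
  · rintro q ⟨f, hf, hf0, hne, rfl⟩
    have hD0 : 0 ≤ ∫ x in (0:ℝ)..a, f x ^ 2 :=
      intervalIntegral.integral_nonneg ha.le (fun x _ => sq_nonneg _)
    have hD : 0 < ∫ x in (0:ℝ)..a, f x ^ 2 := lt_of_le_of_ne hD0 (Ne.symm hne)
    rw [le_div_iff₀ hD, aux5_sqrt a ha ha1]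
    calc π ^ 2 / 4 * ∫ x in (0:ℝ)..a, f x ^ 2
        ≤ (∫ x in (0:ℝ)..a, derivWithin f (Icc 0 a) x ^ 2)
            + π * Real.tan (π * a / 2) / 2 * f a ^ 2 := aux5_lower a ha ha1 f hf
      _ = (∫ x in (0:ℝ)..a, derivWithin f (Icc 0 a) x ^ 2)
            + π * Real.tan (π * a / 2) / 2 * f a ^ 2 := rfl
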